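/- Let $Y(z) = \sum_{k=0}^\infty y_k z^k$ be a power series with $y_k \ge 0$, $y_0 > 0$, $Y(1)=1$, $Y'(1) < 1$, analytic on $|z| < R$ with $R > 1$, and let $t_0 = \sup\{t \in (0,R) : Y'(t)t - Y(t) \le 0\}$. Then the function $z \mapsto Y(z)/z$ is injective on the punctured open disk $\{z \in \mathbb{C} : 0 < |z| < t_0\}$. -/

import Mathlib

set_option maxHeartbeats 1000000


open Set

private lemma abs_pow_sub_pow_le' (a b : ℂ) (t : ℝ) (ha : ‖a‖ ≤ t)
    (hb : ‖b‖ ≤ t) : ∀ n : ℕ,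
    ‖a ^ (n + 1) - b ^ (n + 1)‖ ≤ (n + 1) * t ^ n * ‖a - b‖ := by
  have ht : 0 ≤ t := le_trans (norm_nonneg a) ha
  intro n
  induction n with
  | zero => simp
  | succ n ih =>
    have key : a ^ (n + 1 + 1) - b ^ (n + 1 + 1)
        = a * (a ^ (n + 1) - b ^ (n + 1)) + (a - b) * b ^ (n + 1) := by ring
    have step1 : ‖a ^ (n + 1 + 1) - b ^ (n + 1 + 1)‖
        ≤ ‖a‖ * ‖a ^ (n + 1) - b ^ (n + 1)‖
          + ‖a - b‖ * (‖b‖) ^ (n + 1) := by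
      rw [key]
      refine le_trans (norm_add_le _ _) ?_
      rw [norm_mul, norm_mul, norm_pow]
    have hbpow : (‖b‖) ^ (n + 1) ≤ t ^ (n + 1) :=
      pow_le_pow_left₀ (norm_nonneg b) hb _
    have habnn : 0 ≤ ‖a - b‖ := norm_nonneg _
    have step2 : ‖a‖ * ‖a ^ (n + 1) - b ^ (n + 1)‖
        ≤ t * ((n + 1) * t ^ n * ‖a - b‖) := by
      apply mul_le_mul ha ih (norm_nonneg _) ht
    have step3 : ‖a - b‖ * (‖b‖) ^ (n + 1)
        ≤ ‖a - b‖ * t ^ (n + 1) :=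
      mul_le_mul_of_nonneg_left hbpow habnn
    have e : t * ((n + 1) * t ^ n * ‖a - b‖) + ‖a - b‖ * t ^ (n + 1)
        = ((n : ℝ) + 1 + 1) * t ^ (n + 1) * ‖a - b‖ := by ring
    have : ‖a ^ (n + 1 + 1) - b ^ (n + 1 + 1)‖
        ≤ ((n : ℝ) + 1 + 1) * t ^ (n + 1) * ‖a - b‖ := by
      rw [← e]; linarith
    convert this using 2
    push_cast
    ring

/-- for a PGF `Y` with `y₀ > 0`, `Y(1)=1`, `Y'(1)<1`, analytic on
`|z| < R` with `R > 1`, the map `z ↦ Y(z)/z` is injective on the punctured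
open disk `{z : 0 < |z| < t₀}`, where
`t₀ = sup {t ∈ (0,R) : Y'(t)·t - Y(t) ≤ 0}`. -/
theorem fctl_Y_div_z_injective (y : ℕ → ℝ) (R : ℝ) (hR : 1 < R)
    (hy : ∀ k, 0 ≤ y k) (hy0 : 0 < y 0)
    (hconv : ∀ z : ℂ, ‖z‖ < R → Summable (fun k : ℕ => (y k : ℂ) * z ^ k))
    (hconv' : ∀ t : ℝ, 0 < t → t < R →
      Summable (fun k : ℕ => (k : ℝ) * y k * t ^ (k - 1)))
    (hY1 : ∑' k : ℕ, y k = 1) (hY'1 : ∑' k : ℕ, (k : ℝ) * y k < 1)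
    (t0 : ℝ)
    (ht0 : t0 = sSup {t : ℝ | t ∈ Ioo 0 R ∧
      (∑' k : ℕ, (k : ℝ) * y k * t ^ (k - 1)) * t - (∑' k : ℕ, y k * t ^ k) ≤ 0}) :
    InjOn (fun z : ℂ => (∑' k : ℕ, (y k : ℂ) * z ^ k) / z)
      {z : ℂ | 0 < ‖z‖ ∧ ‖z‖ < t0} := by
  set S := {t : ℝ | t ∈ Ioo 0 R ∧
      (∑' k : ℕ, (k : ℝ) * y k * t ^ (k - 1)) * t - (∑' k : ℕ, y k * t ^ k) ≤ 0} with hS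
  -- 1 ∈ S
  have h1S : (1 : ℝ) ∈ S := by
    constructor
    · exact ⟨one_pos, hR⟩
    · simp only [one_pow, mul_one]
      linarith [hY1, hY'1]
  have hSne : S.Nonempty := ⟨1, h1S⟩
  have hSbdd : BddAbove S := ⟨R, fun s hs => le_of_lt hs.1.2⟩
  have ht0R : t0 ≤ R := ht0 ▸ csSup_le hSne (fun s hs => le_of_lt hs.1.2)
  -- summability of the shifted derivative-like series
  have hD : ∀ r : ℝ, 0 < r → r < R →
      Summable (fun k : ℕ => ((k : ℝ) + 1) * y (k + 2) * r ^ (k + 2)) := by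
    intro r hr hrR
    have h1 : Summable (fun k : ℕ => ((k + 2 : ℕ) : ℝ) * y (k + 2) * r ^ ((k + 2) - 1)) :=
      ((summable_nat_add_iff 2).mpr (hconv' r hr hrR))
    have h2 : Summable (fun k : ℕ => (((k + 2 : ℕ) : ℝ) * y (k + 2) * r ^ (k + 1)) * r) :=
      h1.mul_right r
    apply h2.of_nonneg_of_le
    · intro k
      exact mul_nonneg (mul_nonneg (by positivity) (hy _)) (pow_nonneg hr.le _)
    · intro k
      calc ((k : ℝ) + 1) * y (k + 2) * r ^ (k + 2)
          ≤ ((k : ℝ) + 2) * y (k + 2) * r ^ (k + 2) := by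
            have h3 := hy (k + 2); have h4 := pow_nonneg hr.le (k + 2); nlinarith
        _ = ((k + 2 : ℕ) : ℝ) * y (k + 2) * r ^ (k + 1) * r := by push_cast; ring
  -- summability of y k * r^k for real r, 0 < r < R
  have hB : ∀ r : ℝ, 0 < r → r < R → Summable (fun k : ℕ => y k * r ^ k) := by
    intro r hr hrR
    have := hconv (r : ℂ) (by rwa [Complex.norm_real, Real.norm_eq_abs, abs_of_pos hr])
    rw [show (fun k : ℕ => (y k : ℂ) * (r : ℂ) ^ k) = (fun k : ℕ => ((y k * r ^ k : ℝ) : ℂ)) by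
      funext k; push_cast; ring] at this
    exact Complex.summable_ofReal.mp this
  -- key identity: for 0 < s < R, the shifted sum equals A(s)*s - B(s) + y 0
  have hId : ∀ s : ℝ, 0 < s → s < R →
      ∑' k : ℕ, ((k : ℝ) + 1) * y (k + 2) * s ^ (k + 2)
        = (∑' k : ℕ, (k : ℝ) * y k * s ^ (k - 1)) * s - (∑' k : ℕ, y k * s ^ k) + y 0 := by
    intro s hs hsR
    have hA := hconv' s hs hsR
    have hAs : Summable (fun k : ℕ => ((k : ℝ) * y k * s ^ (k - 1)) * s) := hA.mul_right s
    have hBs := hB s hs hsR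
    have hf : Summable (fun k : ℕ => ((k : ℝ) * y k * s ^ (k - 1)) * s - y k * s ^ k) :=
      hAs.sub hBs
    have e1 : (∑' k : ℕ, (k : ℝ) * y k * s ^ (k - 1)) * s - (∑' k : ℕ, y k * s ^ k)
        = ∑' k : ℕ, (((k : ℝ) * y k * s ^ (k - 1)) * s - y k * s ^ k) := by
      rw [← tsum_mul_right, ← Summable.tsum_sub hAs hBs]
    rw [e1]
    rw [Summable.tsum_eq_zero_add hf, Summable.tsum_eq_zero_add ((summable_nat_add_iff 1).mpr hf)]
    have h0 : ((0 : ℕ) : ℝ) * y 0 * s ^ (0 - 1) * s - y 0 * s ^ 0 = -(y 0) := by simp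
    have h1 : ((0 + 1 : ℕ) : ℝ) * y (0 + 1) * s ^ ((0 + 1) - 1) * s - y (0 + 1) * s ^ (0 + 1) = 0 := by
      simp [pow_succ]
    rw [h0, h1]
    have h2 : (fun k : ℕ => ((k + 1 + 1 : ℕ) : ℝ) * y (k + 1 + 1) * s ^ ((k + 1 + 1) - 1) * s
        - y (k + 1 + 1) * s ^ (k + 1 + 1)) = fun k : ℕ => ((k : ℝ) + 1) * y (k + 2) * s ^ (k + 2) := by
      funext k
      have e : k + 1 + 1 - 1 = k + 1 := rfl
      rw [e]
      push_cast
      ring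
    rw [h2]
    ring
  -- main injectivity argument
  intro a ha b hb heq
  by_contra hne
  obtain ⟨ha0, hat0⟩ := ha
  obtain ⟨hb0, hbt0⟩ := hb
  set t := max (‖a‖) (‖b‖) with htdef
  have ht_pos : 0 < t := lt_max_of_lt_left ha0
  have ht_lt : t < t0 := max_lt hat0 hbt0
  have ht_R : t < R := lt_of_lt_of_le ht_lt ht0R
  obtain ⟨s, hsS, hts⟩ := exists_lt_of_lt_csSup hSne (by rw [← ht0]; exact ht_lt)
  have hs0 : 0 < s := hsS.1.1
  have hsR : s < R := hsS.1.2
  -- strict bound ∑' D t < y 0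
  have hDt := hD t ht_pos ht_R
  have hDs := hD s hs0 hsR
  have hDs_le : ∑' k : ℕ, ((k : ℝ) + 1) * y (k + 2) * s ^ (k + 2) ≤ y 0 := by
    rw [hId s hs0 hsR]
    linarith [hsS.2]
  have hCt : ∑' k : ℕ, ((k : ℝ) + 1) * y (k + 2) * t ^ (k + 2) < y 0 := by
    by_cases hy2 : ∀ k, y (k + 2) = 0
    · have : (fun k : ℕ => ((k : ℝ) + 1) * y (k + 2) * t ^ (k + 2)) = fun _ => 0 := by
        funext k; rw [hy2 k]; ring
      rw [this, tsum_zero]; exact hy0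
    · push_neg at hy2
      obtain ⟨m, hm⟩ := hy2
      have hm' : 0 < y (m + 2) := lt_of_le_of_ne (hy (m + 2)) (Ne.symm hm)
      have hlt : ∑' k : ℕ, ((k : ℝ) + 1) * y (k + 2) * t ^ (k + 2)
          < ∑' k : ℕ, ((k : ℝ) + 1) * y (k + 2) * s ^ (k + 2) := by
        apply Summable.tsum_lt_tsum (i := m) _ _ hDt hDs
        · intro k
          dsimp only
          have : t ^ (k + 2) ≤ s ^ (k + 2) := pow_le_pow_left₀ ht_pos.le hts.le _
          exact mul_le_mul_of_nonneg_left this (mul_nonneg (by positivity) (hy _))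
        · have : t ^ (m + 2) < s ^ (m + 2) :=
            pow_lt_pow_left₀ hts ht_pos.le (by norm_num)
          exact mul_lt_mul_of_pos_left this (mul_pos (by positivity) hm')
      linarith
  -- complex side
  have haR : ‖a‖ < R := lt_of_le_of_lt (le_max_left _ _) ht_R
  have hbR : ‖b‖ < R := lt_of_le_of_lt (le_max_right _ _) ht_R
  have hane : a ≠ 0 := fun h => by simp [h] at ha0
  have hbne : b ≠ 0 := fun h => by simp [h] at hb0
  have heq' : (∑' k : ℕ, (y k : ℂ) * a ^ k) * b = (∑' k : ℕ, (y k : ℂ) * b ^ k) * a := by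
    have := heq
    simp only at this
    field_simp at this
    linear_combination this
  set h : ℕ → ℂ := fun k => (y k : ℂ) * a ^ k * b - (y k : ℂ) * b ^ k * a with hh
  have hsa : Summable (fun k : ℕ => (y k : ℂ) * a ^ k * b) := (hconv a haR).mul_right b
  have hsb : Summable (fun k : ℕ => (y k : ℂ) * b ^ k * a) := (hconv b hbR).mul_right a
  have hsum_h : Summable h := hsa.sub hsb
  have htsum_h : ∑' k, h k = 0 := by
    rw [hh]
    rw [Summable.tsum_sub hsa hsb, tsum_mul_right, tsum_mul_right, heq', sub_self]
  have hsplit : ∑' k, h k = h 0 + (h 1 + ∑' k, h (k + 1 + 1)) := by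
    rw [Summable.tsum_eq_zero_add hsum_h, Summable.tsum_eq_zero_add ((summable_nat_add_iff 1).mpr hsum_h)]
  have hh0 : h 0 = (y 0 : ℂ) * (b - a) := by simp [hh]; ring
  have hh1 : h 1 = 0 := by simp [hh]; ring
  have hT : ∑' k, h (k + 1 + 1) = (y 0 : ℂ) * (a - b) := by
    have := htsum_h
    rw [hsplit, hh0, hh1] at this
    linear_combination this
  -- bound terms of h (k+2)
  have hbound : ∀ k : ℕ, ‖h (k + 1 + 1)‖
      ≤ (((k : ℝ) + 1) * y (k + 2) * t ^ (k + 2)) * ‖a - b‖ := by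
    intro k
    have hid : h (k + 1 + 1) = (y (k + 2) : ℂ) * (a * b * (a ^ (k + 1) - b ^ (k + 1))) := by
      simp only [hh]
      ring
    rw [hid]
    rw [norm_mul, norm_mul, norm_mul, Complex.norm_real, Real.norm_eq_abs, abs_of_nonneg (hy (k + 2))]
    have hpow := abs_pow_sub_pow_le' a b t (le_max_left _ _) (le_max_right _ _) k
    have hta : ‖a‖ ≤ t := le_max_left _ _
    have htb : ‖b‖ ≤ t := le_max_right _ _
    have habnn : 0 ≤ ‖a - b‖ := norm_nonneg _
    have h1 : ‖a‖ * ‖b‖ * ‖a ^ (k + 1) - b ^ (k + 1)‖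
        ≤ t * t * (((k : ℝ) + 1) * t ^ k * ‖a - b‖) := by
      gcongr
      all_goals exact norm_nonneg _
    have h2 : t * t * (((k : ℝ) + 1) * t ^ k * ‖a - b‖)
        = (((k : ℝ) + 1) * t ^ (k + 2)) * ‖a - b‖ := by ring
    nlinarith [hy (k + 2), mul_le_mul_of_nonneg_left h1 (hy (k + 2))]
  have hsum_bound : Summable (fun k : ℕ =>
      (((k : ℝ) + 1) * y (k + 2) * t ^ (k + 2)) * ‖a - b‖) :=
    hDt.mul_right _
  have hsum_norm : Summable (fun k : ℕ => ‖h (k + 1 + 1)‖) :=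
    hsum_bound.of_nonneg_of_le (fun k => norm_nonneg _) hbound
  have hchain : y 0 * ‖a - b‖
      ≤ (∑' k : ℕ, ((k : ℝ) + 1) * y (k + 2) * t ^ (k + 2)) * ‖a - b‖ := by
    calc y 0 * ‖a - b‖
        = ‖(y 0 : ℂ) * (a - b)‖ := by
          rw [norm_mul, Complex.norm_real, Real.norm_eq_abs, abs_of_pos hy0]
      _ = ‖∑' k, h (k + 1 + 1)‖ := by rw [hT]
      _ ≤ ∑' k, ‖h (k + 1 + 1)‖ := by
          have hn : Summable (fun k : ℕ => ‖h (k + 1 + 1)‖) := by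
            simpa using hsum_norm
          have := norm_tsum_le_tsum_norm (f := fun k : ℕ => h (k + 1 + 1)) hn
          simpa using this
      _ ≤ ∑' k : ℕ, (((k : ℝ) + 1) * y (k + 2) * t ^ (k + 2)) * ‖a - b‖ :=
          Summable.tsum_le_tsum hbound hsum_norm hsum_bound
      _ = (∑' k : ℕ, ((k : ℝ) + 1) * y (k + 2) * t ^ (k + 2)) * ‖a - b‖ :=
          tsum_mul_right
  have habpos : 0 < ‖a - b‖ := by
    rw [norm_pos_iff]
    exact sub_ne_zero.mpr hne
  nlinarith [hchain, hCt, habpos]
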